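/- Second law for the embedded chain: let S be a finite set with at least two elements, k : S × S → ℝ strictly positive on distinct pairs, and π : S → ℝ a strictly positive, normalized stationary distribution for k. Fix m ≥ 1, and for trajectories ω = (j₀,…,j_m) with consecutive states distinct define P_F(ω) = π(j₀)·∏ k(j_i,j_{i+1})/λ(j_i), with λ(j) = ∑_{i≠j} k(j,i), and Σ(ω) = ∑ log( k(j_i,j_{i+1})·π(j_i) / ( k(j_{i+1},j_i)·π(j_{i+1}) ) ). Then the mean entropy production is nonnegative: ∑_ω P_F(ω)·Σ(ω) ≥ 0. -/

import Mathlib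

open Finset

private def mySnocEquiv (n : ℕ) (S : Type) : ((Fin n → S) × S) ≃ (Fin (n+1) → S) where
  toFun p := Fin.snoc p.1 p.2
  invFun f := (fun i => f i.castSucc, f (Fin.last n))
  left_inv p := by ext i <;> simp
  right_inv f := by
    funext i
    induction i using Fin.lastCases with
    | last => simp
    | cast i => simp

private lemma cond_snoc {S : Type} (m : ℕ) (f : Fin (m+1) → S) (x : S) :
    (∀ i : Fin (m+1), (Fin.snoc f x : Fin (m+2) → S) i.succ ≠ (Fin.snoc f x : Fin (m+2) → S) i.castSucc) ↔
    ((∀ i : Fin m, f i.succ ≠ f i.castSucc) ∧ x ≠ f (Fin.last m)) := by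
  constructor
  · intro h
    refine ⟨fun i => ?_, ?_⟩
    · have := h i.castSucc
      rwa [Fin.succ_castSucc, Fin.snoc_castSucc, Fin.snoc_castSucc] at this
    · have := h (Fin.last m)
      rwa [Fin.succ_last, Fin.snoc_last, Fin.snoc_castSucc] at this
  · rintro ⟨h1, h2⟩ i
    induction i using Fin.lastCases with
    | last => simpa using h2
    | cast i =>
      have := h1 i
      rw [Fin.succ_castSucc, Fin.snoc_castSucc, Fin.snoc_castSucc]
      exact this

private lemma traj_sum {S : Type} [Fintype S] [DecidableEq S]
    (w : S → S → ℝ) (μ g : S → ℝ)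
    (hg : ∀ j, ∑ i ∈ univ.erase j, w j i * g i = g j) (m : ℕ) :
    ∑ f ∈ univ.filter (fun f : Fin (m+1) → S =>
        ∀ i : Fin m, f i.succ ≠ f i.castSucc),
      μ (f 0) * ((∏ i : Fin m, w (f i.castSucc) (f i.succ)) * g (f (Fin.last m)))
      = ∑ j, μ j * g j := by
  induction m with
  | zero =>
    rw [Finset.filter_true_of_mem (fun f _ => fun i => i.elim0)]
    exact Fintype.sum_equiv (Equiv.funUnique (Fin 1) S) _ _ (fun f => by simp)
  | succ m ih =>
    rw [Finset.sum_filter] at ih ⊢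
    rw [← Equiv.sum_comp (mySnocEquiv (m+1) S), Fintype.sum_prod_type]
    rw [← ih]
    apply Finset.sum_congr rfl
    intro f' _
    simp only [mySnocEquiv, Equiv.coe_fn_mk, cond_snoc]
    by_cases hf : ∀ i : Fin m, f' i.succ ≠ f' i.castSucc
    · have hc : ∀ x : S, ((∀ i : Fin m, f' i.succ ≠ f' i.castSucc) ∧ x ≠ f' (Fin.last m))
          ↔ (x ≠ f' (Fin.last m)) := fun x => by simp [hf]
      simp only [hc]
      have hval : ∀ x : S,
          μ ((Fin.snoc f' x : Fin (m+2) → S) 0) * ((∏ i : Fin (m+1),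
              w ((Fin.snoc f' x : Fin (m+2) → S) i.castSucc) ((Fin.snoc f' x : Fin (m+2) → S) i.succ)) *
            g ((Fin.snoc f' x : Fin (m+2) → S) (Fin.last (m+1))))
          = μ (f' 0) * ((∏ i : Fin m, w (f' i.castSucc) (f' i.succ)) *
              (w (f' (Fin.last m)) x * g x)) := by
        intro x
        rw [Fin.prod_univ_castSucc]
        have h0 : (Fin.snoc f' x : Fin (m+2) → S) (0 : Fin (m+2)) = f' 0 := by
          rw [show (0 : Fin (m+2)) = Fin.castSucc 0 by rfl, Fin.snoc_castSucc]
        have hlast : (Fin.snoc f' x : Fin (m+2) → S) (Fin.last (m+1)) = x := Fin.snoc_last _ _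
        have hstep : ∀ i : Fin m,
            w ((Fin.snoc f' x : Fin (m+2) → S) i.castSucc.castSucc) ((Fin.snoc f' x : Fin (m+2) → S) i.castSucc.succ)
            = w (f' i.castSucc) (f' i.succ) := by
          intro i
          rw [Fin.succ_castSucc, Fin.snoc_castSucc, Fin.snoc_castSucc]
        rw [h0, Fin.succ_last, hlast,
          show (Fin.last m).castSucc = Fin.castSucc (Fin.last m) by rfl,
          Fin.snoc_castSucc]
        rw [Finset.prod_congr rfl (fun i _ => hstep i)]
        ring
      calc ∑ x : S, (if x ≠ f' (Fin.last m) then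
              μ ((Fin.snoc f' x : Fin (m+2) → S) 0) * ((∏ i : Fin (m+1),
                w ((Fin.snoc f' x : Fin (m+2) → S) i.castSucc) ((Fin.snoc f' x : Fin (m+2) → S) i.succ)) *
                g ((Fin.snoc f' x : Fin (m+2) → S) (Fin.last (m+1)))) else 0)
          = ∑ x ∈ univ.erase (f' (Fin.last m)),
              μ (f' 0) * ((∏ i : Fin m, w (f' i.castSucc) (f' i.succ)) *
              (w (f' (Fin.last m)) x * g x)) := by
            rw [← Finset.sum_filter]
            refine Finset.sum_congr ?_ (fun x _ => hval x)
            ext x; simp [Finset.mem_erase, and_comm]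
        _ = μ (f' 0) * ((∏ i : Fin m, w (f' i.castSucc) (f' i.succ)) *
              g (f' (Fin.last m))) := by
            rw [← Finset.mul_sum, ← Finset.mul_sum, hg]
        _ = if ∀ i : Fin m, f' i.succ ≠ f' i.castSucc then
              μ (f' 0) * ((∏ i : Fin m, w (f' i.castSucc) (f' i.succ)) *
                g (f' (Fin.last m))) else 0 := (if_pos hf).symm
    · simp [hf]


open Finset in
/-- Second law for the embedded chain: the mean entropy production over
all length-`m` trajectories with consecutive states distinct is nonnegative:
`∑_ω P_F(ω)·Σ(ω) ≥ 0`, where `P_F(ω) = π(j₀) ∏ᵢ k(jᵢ,jᵢ₊₁)/λ(jᵢ)` and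
`Σ(ω) = ∑ᵢ log( k(jᵢ,jᵢ₊₁)·π(jᵢ) / ( k(jᵢ₊₁,jᵢ)·π(jᵢ₊₁) ) )`. -/
theorem second_law_embedded_chain
    {S : Type} [Fintype S] [DecidableEq S] (hS : 1 < Fintype.card S)
    (k : S → S → ℝ) (hk : ∀ i j, i ≠ j → 0 < k i j)
    (π : S → ℝ) (hπ : ∀ j, 0 < π j) (hπ1 : ∑ j, π j = 1)
    (hstat : ∀ j, ∑ i ∈ univ.erase j, π i * k i j
      = π j * ∑ i ∈ univ.erase j, k j i)
    (m : ℕ) (hm : 1 ≤ m) :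
    let lam : S → ℝ := fun j => ∑ i ∈ univ.erase j, k j i
    let PF : (Fin (m + 1) → S) → ℝ := fun f =>
      π (f 0) * ∏ i : Fin m, k (f i.castSucc) (f i.succ) / lam (f i.castSucc)
    let Sig : (Fin (m + 1) → S) → ℝ := fun f =>
      ∑ i : Fin m, Real.log (k (f i.castSucc) (f i.succ) * π (f i.castSucc)
        / (k (f i.succ) (f i.castSucc) * π (f i.succ)))
    0 ≤ ∑ f ∈ univ.filter (fun f : Fin (m + 1) → S =>
        ∀ i : Fin m, f i.succ ≠ f i.castSucc), PF f * Sig f := by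
  intro lam PF Sig
  have hlam : ∀ j, 0 < lam j := by
    intro j
    apply Finset.sum_pos
    · intro i hi
      exact hk j i (Ne.symm (Finset.ne_of_mem_erase hi))
    · rw [← Finset.card_pos, Finset.card_erase_of_mem (Finset.mem_univ j),
        Finset.card_univ]
      omega
  set T : Finset (Fin (m + 1) → S) := univ.filter (fun f : Fin (m + 1) → S =>
      ∀ i : Fin m, f i.succ ≠ f i.castSucc) with hT
  set B : (Fin (m + 1) → S) → ℝ := fun f =>
      (∏ i : Fin m, k (f i.succ) (f i.castSucc) / lam (f i.castSucc))
        * π (f (Fin.last m)) with hB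
  have hA1 : ∑ f ∈ T, PF f = 1 := by
    have h := traj_sum (fun j i => k j i / lam j) π (fun _ => 1)
      (fun j => by
        simp only [mul_one]
        rw [← Finset.sum_div]
        exact div_self (hlam j).ne') m
    calc ∑ f ∈ T, PF f
        = ∑ f ∈ T, π (f 0) * ((∏ i : Fin m,
            k (f i.castSucc) (f i.succ) / lam (f i.castSucc)) * 1) := by
          apply Finset.sum_congr rfl; intro f _; rw [mul_one]
      _ = ∑ j, π j * 1 := h
      _ = 1 := by simpa using hπ1
  have hB1 : ∑ f ∈ T, B f = 1 := by
    have h := traj_sum (fun j i => k i j / lam j) (fun _ => 1) π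
      (fun j => by
        have e : ∀ i ∈ univ.erase j, k i j / lam j * π i = π i * k i j / lam j :=
          fun i _ => by ring
        rw [Finset.sum_congr rfl e, ← Finset.sum_div, hstat j,
          mul_div_assoc, div_self (hlam j).ne', mul_one]) m
    calc ∑ f ∈ T, B f
        = ∑ f ∈ T, (1:ℝ) * ((∏ i : Fin m,
            k (f i.succ) (f i.castSucc) / lam (f i.castSucc))
            * π (f (Fin.last m))) := by
          apply Finset.sum_congr rfl; intro f _; rw [one_mul]
      _ = ∑ j, (1:ℝ) * π j := h
      _ = 1 := by simpa using hπ1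
  have key : ∀ f ∈ T, PF f - B f ≤ PF f * Sig f := by
    intro f hfT
    have hf : ∀ i : Fin m, f i.succ ≠ f i.castSucc := (Finset.mem_filter.mp hfT).2
    have hApos : 0 < PF f := by
      apply mul_pos (hπ _)
      exact Finset.prod_pos fun i _ => div_pos (hk _ _ (hf i).symm) (hlam _)
    have hBpos : 0 < B f := by
      apply mul_pos _ (hπ _)
      exact Finset.prod_pos fun i _ => div_pos (hk _ _ (hf i)) (hlam _)
    have hSig : Sig f = Real.log (PF f / B f) := by
      have hq : ∀ i : Fin m, 0 < k (f i.castSucc) (f i.succ) * π (f i.castSucc)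
          / (k (f i.succ) (f i.castSucc) * π (f i.succ)) := fun i =>
        div_pos (mul_pos (hk _ _ (hf i).symm) (hπ _)) (mul_pos (hk _ _ (hf i)) (hπ _))
      rw [show Sig f = ∑ i : Fin m, Real.log (k (f i.castSucc) (f i.succ) * π (f i.castSucc)
          / (k (f i.succ) (f i.castSucc) * π (f i.succ))) from rfl,
        ← Real.log_prod (fun i _ => (hq i).ne')]
      congr 1
      have key2 : (∏ i : Fin m, π (f i.castSucc)) * π (f (Fin.last m))
          = π (f 0) * ∏ i : Fin m, π (f i.succ) := by
        rw [← Fin.prod_univ_castSucc (f := fun i => π (f i)),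
          Fin.prod_univ_succ]
      have hP1 : (0:ℝ) < ∏ i : Fin m, k (f i.castSucc) (f i.succ) :=
        Finset.prod_pos fun i _ => hk _ _ (hf i).symm
      have hP2 : (0:ℝ) < ∏ i : Fin m, k (f i.succ) (f i.castSucc) :=
        Finset.prod_pos fun i _ => hk _ _ (hf i)
      have hQ1 : (0:ℝ) < ∏ i : Fin m, π (f i.castSucc) :=
        Finset.prod_pos fun i _ => hπ _
      have hQ2 : (0:ℝ) < ∏ i : Fin m, π (f i.succ) :=
        Finset.prod_pos fun i _ => hπ _
      have hL : (0:ℝ) < ∏ i : Fin m, lam (f i.castSucc) :=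
        Finset.prod_pos fun i _ => hlam _
      have e1 : PF f = π (f 0) * ((∏ i : Fin m, k (f i.castSucc) (f i.succ))
          / ∏ i : Fin m, lam (f i.castSucc)) := by
        rw [show PF f = π (f 0) * ∏ i : Fin m,
          k (f i.castSucc) (f i.succ) / lam (f i.castSucc) from rfl,
          Finset.prod_div_distrib]
      have e2 : B f = ((∏ i : Fin m, k (f i.succ) (f i.castSucc))
          / ∏ i : Fin m, lam (f i.castSucc)) * π (f (Fin.last m)) := by
        show (∏ i : Fin m, k (f i.succ) (f i.castSucc) / lam (f i.castSucc))
          * π (f (Fin.last m)) = _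
        rw [Finset.prod_div_distrib]
      rw [Finset.prod_div_distrib, Finset.prod_mul_distrib, Finset.prod_mul_distrib,
        e1, e2]
      rw [div_eq_div_iff (mul_pos hP2 hQ2).ne'
        (mul_pos (div_pos hP2 hL) (hπ _)).ne']
      field_simp
      linear_combination key2
    have hlog := Real.log_le_sub_one_of_pos (div_pos hBpos hApos)
    have h1 : PF f * Real.log (B f / PF f) ≤ PF f * (B f / PF f - 1) :=
      mul_le_mul_of_nonneg_left hlog hApos.le
    have h2 : PF f * (B f / PF f - 1) = B f - PF f := by field_simp
    have h3 : Real.log (PF f / B f) = - Real.log (B f / PF f) := by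
      rw [← Real.log_inv, inv_div]
    rw [hSig, h3]
    nlinarith [h1, h2]
  have hsum := Finset.sum_le_sum key
  rw [Finset.sum_sub_distrib, hA1, hB1] at hsum
  linarith
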